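/- Let A be a Banach algebra and I a closed two-sided ideal of A possessing a bounded approximate identity. Then I is weakly amenable (every continuous derivation I → I* is inner) if and only if A is I-weakly amenable (every continuous derivation A → I* is inner). -/

import Mathlib

open ContinuousLinearMap Filter Topology

namespace Paper

structure Bimod (A : Type*) [NormedRing A] [NormedAlgebra ℂ A]
    (X : Type*) [NormedAddCommGroup X] [NormedSpace ℂ X] where
  l : A → X →L[ℂ] X
  r : A → X →L[ℂ] X
  l_mul : ∀ a b x, l (a * b) x = l a (l b x)
  r_mul : ∀ a b x, r (a * b) x = r b (r a x)
  lr : ∀ a b x, l a (r b x) = r b (l a x)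

variable {A : Type*} [NormedRing A] [NormedAlgebra ℂ A]
variable {X : Type*} [NormedAddCommGroup X] [NormedSpace ℂ X]

noncomputable def Bimod.dual (M : Bimod A X) : Bimod A (X →L[ℂ] ℂ) where
  l a := (compL ℂ X X ℂ).flip (M.r a)
  r a := (compL ℂ X X ℂ).flip (M.l a)
  l_mul a b f := by ext x; simp [M.r_mul]
  r_mul a b f := by ext x; simp [M.l_mul]
  lr a b f := by ext x; simp [M.lr]

def IsDerivation (M : Bimod A X) (D : A →L[ℂ] X) : Prop :=
  ∀ a b, D (a * b) = M.l a (D b) + M.r b (D a)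

def IsInner (M : Bimod A X) (D : A →L[ℂ] X) : Prop :=
  ∃ x, ∀ a, D a = M.l a x - M.r a x

noncomputable def Bimod.restrict (M : Bimod A X) (Y : Submodule ℂ X)
    (hl : ∀ a, ∀ y ∈ Y, M.l a y ∈ Y) (hr : ∀ a, ∀ y ∈ Y, M.r a y ∈ Y) :
    Bimod A Y where
  l a := ((M.l a).comp Y.subtypeL).codRestrict Y fun y => hl a y y.2
  r a := ((M.r a).comp Y.subtypeL).codRestrict Y fun y => hr a y y.2
  l_mul a b y := Subtype.ext (M.l_mul a b y)
  r_mul a b y := Subtype.ext (M.r_mul a b y)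
  lr a b y := Subtype.ext (M.lr a b y)

noncomputable def algBimod (A : Type*) [NormedRing A] [NormedAlgebra ℂ A] : Bimod A A where
  l a := ContinuousLinearMap.mul ℂ A a
  r a := (ContinuousLinearMap.mul ℂ A).flip a
  l_mul a b x := mul_assoc a b x
  r_mul a b x := (mul_assoc x a b).symm
  lr a b x := (mul_assoc a x b).symm

noncomputable def idealBimod (I : Submodule ℂ A)
    (hL : ∀ a, ∀ x ∈ I, a * x ∈ I) (hR : ∀ a, ∀ x ∈ I, x * a ∈ I) :
    Bimod A I where
  l a := ((ContinuousLinearMap.mul ℂ A a).comp I.subtypeL).codRestrict I fun x => hL a x x.2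
  r a := (((ContinuousLinearMap.mul ℂ A).flip a).comp I.subtypeL).codRestrict I fun x => hR a x x.2
  l_mul a b x := Subtype.ext (mul_assoc a b (x : A))
  r_mul a b x := Subtype.ext (mul_assoc (x : A) a b).symm
  lr a b x := Subtype.ext (mul_assoc a (x : A) b).symm


theorem vanish_aux {A : Type*} [NormedRing A] [NormedAlgebra ℂ A]
    (I : Submodule ℂ A)
    (hL : ∀ a : A, ∀ x ∈ I, a * x ∈ I) (hR : ∀ a : A, ∀ x ∈ I, x * a ∈ I)
    {ι : Type} {p : Filter ι} (e : ι → ↥I) (hp : p.NeBot)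
    (hliml : ∀ x : ↥I, Tendsto (fun i => (e i : A) * (x : A)) p (𝓝 (x : A)))
    (Δ : A → (↥I →L[ℂ] ℂ))
    (hΔ : ∀ a b : A, Δ (a * b) = (idealBimod I hL hR).dual.l a (Δ b) +
          (idealBimod I hL hR).dual.r b (Δ a))
    (h0 : ∀ x : ↥I, Δ (x : A) = 0) (a : A) : Δ a = 0 := by
  haveI := hp
  ext x
  have key : ∀ i, Δ a ⟨(e i : A) * (x : A), hL (e i) x x.2⟩ = 0 := by
    intro i
    have h1 := hΔ a ((e i : A))
    have h2 : Δ (a * (e i : A)) = 0 := h0 ⟨a * (e i : A), hL a _ (e i).2⟩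
    have h3 : Δ ((e i : A)) = 0 := h0 (e i)
    rw [h2, h3, map_zero, zero_add] at h1
    have h4 := congrArg (fun f : ↥I →L[ℂ] ℂ => f x) h1.symm
    exact h4
  have hsub : Tendsto (fun i => (⟨(e i : A) * (x : A), hL (e i) x x.2⟩ : ↥I)) p (𝓝 x) :=
    Topology.IsEmbedding.subtypeVal.tendsto_nhds_iff.mpr (hliml x)
  have hT : Tendsto (fun i => Δ a ⟨(e i : A) * (x : A), hL (e i) x x.2⟩) p (𝓝 (Δ a x)) :=
    ((Δ a).continuous.tendsto x).comp hsub
  have hT0 : Tendsto (fun i => Δ a ⟨(e i : A) * (x : A), hL (e i) x x.2⟩) p (𝓝 0) := by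
    simp only [key]; exact tendsto_const_nhds
  have := tendsto_nhds_unique hT hT0
  simpa using this

set_option maxHeartbeats 2000000 in
theorem extend_aux {A : Type*} [NormedRing A] [NormedAlgebra ℂ A]
    (I : Submodule ℂ A)
    (hL : ∀ a : A, ∀ x ∈ I, a * x ∈ I) (hR : ∀ a : A, ∀ x ∈ I, x * a ∈ I)
    {ι : Type} {p : Filter ι} (e : ι → ↥I) (hp : p.NeBot)
    {C : ℝ} (hC : ∀ i, ‖e i‖ ≤ C)
    (hliml : ∀ x : ↥I, Tendsto (fun i => (e i : A) * (x : A)) p (𝓝 (x : A)))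
    (hlimr : ∀ x : ↥I, Tendsto (fun i => (x : A) * (e i : A)) p (𝓝 (x : A)))
    (D : ↥I →L[ℂ] (↥I →L[ℂ] ℂ))
    (hD : ∀ x y : ↥I, D ⟨(x : A) * (y : A), hL x y y.2⟩ =
            (idealBimod I hL hR).dual.l (x : A) (D y) +
            (idealBimod I hL hR).dual.r (y : A) (D x)) :
    ∃ E : A →L[ℂ] (↥I →L[ℂ] ℂ), (∀ x : ↥I, E (x : A) = D x) ∧
      IsDerivation (idealBimod I hL hR).dual E := by
  classical
  haveI := hp
  -- setup
  obtain ⟨K, hK0', hKb⟩ := ContinuousLinearMap.bound (E := ↥I) (F := ↥I →L[ℂ] ℂ) (𝕜 := ℂ)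
    (𝕜₂ := ℂ) (σ₁₂ := RingHom.id ℂ) D
  have hK0 : (0:ℝ) ≤ K := le_of_lt hK0'
  set C' : ℝ := max C 0 with hC'def
  have hC' : ∀ i, ‖(e i : A)‖ ≤ C' := fun i => le_trans (hC i) (le_max_left _ _)
  have hC'0 : (0:ℝ) ≤ C' := le_max_right _ _
  let aei : A → ι → ↥I := fun a i => ⟨a * (e i : A), hL a _ (e i).2⟩
  have haei_coe : ∀ (a : A) (i : ι), ((aei a i : ↥I) : A) = a * (e i : A) := fun _ _ => rfl
  -- pointwise form of hD
  have hDpt : ∀ (x y z : ↥I), D ⟨(x : A) * (y : A), hL x y y.2⟩ z =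
      D y ⟨(z : A) * (x : A), hR x z z.2⟩ + D x ⟨(y : A) * (z : A), hL y z z.2⟩ := by
    intro x y z
    have := congrArg (fun f : ↥I →L[ℂ] ℂ => f z) (hD x y)
    exact this
  -- helper: tendsto in the subtype from tendsto of values
  have hsub : ∀ {g : ι → ↥I} {v : ↥I},
      Tendsto (fun i => (g i : A)) p (𝓝 (v : A)) → Tendsto g p (𝓝 v) := by
    intro g v h
    exact Topology.IsEmbedding.subtypeVal.tendsto_nhds_iff.mpr h
  -- helper: evaluation tendsto
  have hDt : ∀ {g : ι → ↥I} {v : ↥I} (w : ↥I), Tendsto g p (𝓝 v) →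
      Tendsto (fun i => D (g i) w) p (𝓝 (D v w)) := by
    intro g v w h
    exact ((ContinuousLinearMap.apply ℂ ℂ w).continuous.tendsto _).comp
      ((D.continuous.tendsto v).comp h)
  -- bound
  have hFb : ∀ (a : A) (i : ι) (z : ↥I), ‖D (aei a i) z‖ ≤ K * C' * ‖a‖ * ‖z‖ := by
    intro a i z
    have h1 : ‖D (aei a i) z‖ ≤ ‖D (aei a i)‖ * ‖z‖ := (D (aei a i)).le_opNorm z
    have h2 : ‖D (aei a i)‖ ≤ K * ‖aei a i‖ := hKb _
    have h3 : ‖aei a i‖ ≤ ‖a‖ * C' := by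
      have he : ‖aei a i‖ = ‖a * (e i : A)‖ := rfl
      rw [he]
      calc ‖a * (e i : A)‖ ≤ ‖a‖ * ‖(e i : A)‖ := norm_mul_le _ _
      _ ≤ ‖a‖ * C' := mul_le_mul_of_nonneg_left (hC' i) (norm_nonneg a)
    have h4 : K * ‖aei a i‖ ≤ K * (‖a‖ * C') := mul_le_mul_of_nonneg_left h3 hK0
    have h5 : ‖D (aei a i)‖ * ‖z‖ ≤ (K * (‖a‖ * C')) * ‖z‖ :=
      mul_le_mul_of_nonneg_right (le_trans h2 h4) (norm_nonneg z)
    calc ‖D (aei a i) z‖ ≤ (K * (‖a‖ * C')) * ‖z‖ := le_trans h1 h5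
    _ = K * C' * ‖a‖ * ‖z‖ := by ring
  -- convergence on products ⟨y * x⟩
  have hprod : ∀ (a : A) (x y : ↥I),
      Tendsto (fun i => D (aei a i) ⟨(y : A) * (x : A), hL y x x.2⟩) p
        (𝓝 (D ⟨(x : A) * a, hR a x x.2⟩ y - D x ⟨a * (y : A), hL a y y.2⟩)) := by
    intro a x y
    have key : ∀ i, D (aei a i) ⟨(y : A) * (x : A), hL y x x.2⟩ =
        D ⟨(x : A) * (aei a i : A), hL x (aei a i) (aei a i).2⟩ y
          - D x ⟨(aei a i : A) * (y : A), hL (aei a i) y y.2⟩ := by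
      intro i
      have h := hDpt x (aei a i) y
      rw [h]; ring
    rw [show (fun i => D (aei a i) ⟨(y : A) * (x : A), hL y x x.2⟩) = fun i =>
        D ⟨(x : A) * (aei a i : A), hL x (aei a i) (aei a i).2⟩ y
          - D x ⟨(aei a i : A) * (y : A), hL (aei a i) y y.2⟩ from funext key]
    have T1 : Tendsto (fun i => D ⟨(x : A) * (aei a i : A), hL x (aei a i) (aei a i).2⟩ y) p
        (𝓝 (D ⟨(x : A) * a, hR a x x.2⟩ y)) := by
      refine hDt y (hsub ?_)
      simpa [mul_assoc] using hlimr ⟨(x : A) * a, hR a x x.2⟩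
    have T2 : Tendsto (fun i => D x ⟨(aei a i : A) * (y : A), hL (aei a i) y y.2⟩) p
        (𝓝 (D x ⟨a * (y : A), hL a y y.2⟩)) := by
      refine ((D x).continuous.tendsto _).comp (hsub ?_)
      simpa [mul_assoc, haei_coe] using (hliml y).const_mul a
    exact T1.sub T2
  -- existence of limits for all arguments
  have hconv : ∀ (a : A) (z : ↥I), ∃ L : ℂ, Tendsto (fun i => D (aei a i) z) p (𝓝 L) := by
    intro a z
    have hcauchy : Cauchy (Filter.map (fun i => D (aei a i) z) p) := by
      rw [Metric.cauchy_iff]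
      refine ⟨hp.map _, ?_⟩
      intro ε hε
      have hK3 : (0:ℝ) < 2 * (K * C' * ‖a‖) + 3 := by positivity
      set ε' := ε / (2 * (K * C' * ‖a‖) + 3) with hε'
      have hε'0 : 0 < ε' := div_pos hε hK3
      have hzt : Tendsto (fun i => (⟨(e i : A) * (z : A), hL (e i) z z.2⟩ : ↥I)) p (𝓝 z) :=
        hsub (hliml z)
      have hev : ∀ᶠ i in p, dist (⟨(e i : A) * (z : A), hL (e i) z z.2⟩ : ↥I) z < ε' :=
        (Metric.tendsto_nhds.mp hzt) ε' hε'0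
      obtain ⟨i0, hi0⟩ := hev.exists
      set w : ↥I := ⟨(e i0 : A) * (z : A), hL (e i0) z z.2⟩ with hw
      obtain ⟨L0, hL0⟩ : ∃ L0, Tendsto (fun i => D (aei a i) w) p (𝓝 L0) :=
        ⟨_, hprod a z (e i0)⟩
      have hevw : ∀ᶠ i in p, dist (D (aei a i) w) L0 < ε' :=
        (Metric.tendsto_nhds.mp hL0) ε' hε'0
      refine ⟨(fun i => D (aei a i) z) '' {i | dist (D (aei a i) w) L0 < ε'}, ?_, ?_⟩
      · rw [Filter.mem_map]
        exact Filter.mem_of_superset hevw (fun i hi => Set.mem_image_of_mem _ hi)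
      · rintro u ⟨i, hi, rfl⟩ v ⟨j, hj, rfl⟩
        have hi' : dist (D (aei a i) w) L0 < ε' := hi
        have hj' : dist (D (aei a j) w) L0 < ε' := hj
        have hd : ∀ k, dist (D (aei a k) z) (D (aei a k) w) ≤ (K * C' * ‖a‖) * ε' := by
          intro k
          rw [dist_eq_norm, ← map_sub]
          calc ‖D (aei a k) (z - w)‖ ≤ K * C' * ‖a‖ * ‖z - w‖ := hFb a k (z - w)
          _ ≤ (K * C' * ‖a‖) * ε' := by
              have hzw : ‖z - w‖ ≤ ε' := by
                have h' := hi0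
                rw [dist_comm, dist_eq_norm] at h'
                exact le_of_lt h'
              have : (0:ℝ) ≤ K * C' * ‖a‖ := by positivity
              exact mul_le_mul_of_nonneg_left hzw this
        have e1 : dist (D (aei a i) z) L0 ≤
            dist (D (aei a i) z) (D (aei a i) w) + dist (D (aei a i) w) L0 :=
          dist_triangle _ _ _
        have e2 : dist (D (aei a j) z) L0 ≤
            dist (D (aei a j) z) (D (aei a j) w) + dist (D (aei a j) w) L0 :=
          dist_triangle _ _ _
        have e3 : dist (D (aei a i) z) (D (aei a j) z) ≤
            dist (D (aei a i) z) L0 + dist L0 (D (aei a j) z) := dist_triangle _ _ _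
        rw [dist_comm L0 (D (aei a j) z)] at e3
        have hfin : (2 * (K * C' * ‖a‖) + 3) * ε' = ε := by
          rw [hε']
          field_simp
        nlinarith [hd i, hd j, hε'0.le]
    obtain ⟨L, hLl⟩ := CompleteSpace.complete hcauchy
    exact ⟨L, hLl⟩
  -- the extension, pointwise
  let φ : A → ↥I → ℂ := fun a z => limUnder p (fun i => D (aei a i) z)
  have hφ : ∀ a z, Tendsto (fun i => D (aei a i) z) p (𝓝 (φ a z)) :=
    fun a z => tendsto_nhds_limUnder (hconv a z)
  have hφadd : ∀ a (z w : ↥I), φ a (z + w) = φ a z + φ a w := by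
    intro a z w
    refine tendsto_nhds_unique (hφ a (z + w)) ?_
    have h := (hφ a z).add (hφ a w)
    simpa only [map_add] using h
  have hφsmul : ∀ a (c : ℂ) (z : ↥I), φ a (c • z) = c • φ a z := by
    intro a c z
    refine tendsto_nhds_unique (hφ a (c • z)) ?_
    have h := (hφ a z).const_mul c
    simpa only [map_smul, smul_eq_mul] using h
  have hφbound : ∀ a z, ‖φ a z‖ ≤ K * C' * ‖a‖ * ‖z‖ := by
    intro a z
    exact le_of_tendsto (hφ a z).norm (Filter.Eventually.of_forall (fun i => hFb a i z))
  -- build the continuous linear maps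
  let E1 : A → (↥I →L[ℂ] ℂ) := fun a =>
    LinearMap.mkContinuous ⟨⟨φ a, hφadd a⟩, hφsmul a⟩ (K * C' * ‖a‖) (hφbound a)
  have hE1z : ∀ a z, E1 a z = φ a z := fun a z => rfl
  have hE1add : ∀ a b, E1 (a + b) = E1 a + E1 b := by
    intro a b
    ext z
    have h1 : ∀ i, D (aei (a + b) i) z = D (aei a i) z + D (aei b i) z := by
      intro i
      have he : aei (a + b) i = aei a i + aei b i := Subtype.ext (add_mul a b _)
      rw [he, map_add]
      rfl
    have : φ (a + b) z = φ a z + φ b z := by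
      refine tendsto_nhds_unique (hφ (a + b) z) ?_
      have h := (hφ a z).add (hφ b z)
      simpa only [h1] using h
    simpa [hE1z] using this
  have hE1smul : ∀ (c : ℂ) (a : A), E1 (c • a) = c • E1 a := by
    intro c a
    ext z
    have h1 : ∀ i, D (aei (c • a) i) z = c * D (aei a i) z := by
      intro i
      have he : aei (c • a) i = c • aei a i := Subtype.ext (smul_mul_assoc c a _)
      rw [he, map_smul]
      rfl
    have : φ (c • a) z = c * φ a z := by
      refine tendsto_nhds_unique (hφ (c • a) z) ?_
      have h := (hφ a z).const_mul c
      simpa only [h1] using h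
    simpa [hE1z, smul_eq_mul] using this
  have hE1norm : ∀ a, ‖E1 a‖ ≤ (K * C') * ‖a‖ := by
    intro a
    refine ContinuousLinearMap.opNorm_le_bound _ (by positivity) (fun z => ?_)
    calc ‖E1 a z‖ = ‖φ a z‖ := rfl
    _ ≤ K * C' * ‖a‖ * ‖z‖ := hφbound a z
    _ = (K * C') * ‖a‖ * ‖z‖ := by ring
  refine ⟨LinearMap.mkContinuous ⟨⟨E1, hE1add⟩, hE1smul⟩ (K * C') hE1norm, ?_, ?_⟩
  · -- agreement on I
    intro x
    ext z
    show φ (x : A) z = D x z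
    have hg : Tendsto (fun i => aei (x : A) i) p (𝓝 x) := hsub (by exact hlimr x)
    exact tendsto_nhds_unique (hφ (x : A) z) (hDt z hg)
  · -- derivation property
    have hmid : ∀ (a b : A) (z : ↥I) (i : ι),
        D (aei (a * b) i) z = D (aei b i) ⟨(z : A) * a, hR a z z.2⟩
          + φ a ⟨(b * (e i : A)) * (z : A), hL (b * (e i : A)) z z.2⟩ := by
      intro a b z i
      have key : ∀ β : ι, D ⟨(aei a β : A) * (aei b i : A), hL (aei a β : A) _ (aei b i).2⟩ z
          = D (aei b i) ⟨(z : A) * (aei a β : A), hR (aei a β : A) z z.2⟩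
            + D (aei a β) ⟨(aei b i : A) * (z : A), hL (aei b i : A) z z.2⟩ :=
        fun β => hDpt (aei a β) (aei b i) z
      have TL : Tendsto (fun β => D ⟨(aei a β : A) * (aei b i : A),
          hL (aei a β : A) _ (aei b i).2⟩ z) p (𝓝 (D (aei (a * b) i) z)) := by
        refine hDt z (hsub ?_)
        have h := (hliml (aei b i)).const_mul a
        simpa only [haei_coe, mul_assoc] using h
      have TR1 : Tendsto (fun β => D (aei b i) ⟨(z : A) * (aei a β : A),
          hR (aei a β : A) z z.2⟩) p (𝓝 (D (aei b i) ⟨(z : A) * a, hR a z z.2⟩)) := by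
        refine ((D (aei b i)).continuous.tendsto _).comp (hsub ?_)
        have h := hlimr ⟨(z : A) * a, hR a z z.2⟩
        simpa only [haei_coe, mul_assoc] using h
      have TR2 : Tendsto (fun β => D (aei a β) ⟨(aei b i : A) * (z : A),
          hL (aei b i : A) z z.2⟩) p
          (𝓝 (φ a ⟨(b * (e i : A)) * (z : A), hL (b * (e i : A)) z z.2⟩)) := hφ a _
      rw [show (fun β => D ⟨(aei a β : A) * (aei b i : A),
          hL (aei a β : A) _ (aei b i).2⟩ z) = fun β =>
          D (aei b i) ⟨(z : A) * (aei a β : A), hR (aei a β : A) z z.2⟩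
            + D (aei a β) ⟨(aei b i : A) * (z : A), hL (aei b i : A) z z.2⟩
          from funext key] at TL
      exact tendsto_nhds_unique TL (TR1.add TR2)
    have hder : ∀ (a b : A) (z : ↥I), φ (a * b) z
        = φ b ⟨(z : A) * a, hR a z z.2⟩ + φ a ⟨b * (z : A), hL b z z.2⟩ := by
      intro a b z
      have T1 : Tendsto (fun i => D (aei (a * b) i) z) p (𝓝 (φ (a * b) z)) := hφ _ z
      have T2 : Tendsto (fun i => D (aei b i) ⟨(z : A) * a, hR a z z.2⟩) p
          (𝓝 (φ b ⟨(z : A) * a, hR a z z.2⟩)) := hφ b _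
      have T3 : Tendsto (fun i => φ a ⟨(b * (e i : A)) * (z : A), hL (b * (e i : A)) z z.2⟩) p
          (𝓝 (φ a ⟨b * (z : A), hL b z z.2⟩)) := by
        have hg : Tendsto (fun i => (⟨(b * (e i : A)) * (z : A),
            hL (b * (e i : A)) z z.2⟩ : ↥I)) p (𝓝 ⟨b * (z : A), hL b z z.2⟩) := by
          apply hsub
          have h := (hliml z).const_mul b
          simpa only [mul_assoc] using h
        have h := ((E1 a).continuous.tendsto _).comp hg
        simpa only [hE1z, Function.comp_def] using h
      rw [show (fun i => D (aei (a * b) i) z) = fun i =>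
          D (aei b i) ⟨(z : A) * a, hR a z z.2⟩
            + φ a ⟨(b * (e i : A)) * (z : A), hL (b * (e i : A)) z z.2⟩
          from funext (hmid a b z)] at T1
      exact tendsto_nhds_unique T1 (T2.add T3)
    intro a b
    ext z
    show φ (a * b) z = _
    rw [hder a b z]
    rfl

set_option maxHeartbeats 2000000 in
theorem stmt_5
    {A : Type*} [NormedRing A] [NormedAlgebra ℂ A] [CompleteSpace A]
    (I : Submodule ℂ A) (hIc : IsClosed (I : Set A))
    (hL : ∀ a : A, ∀ x ∈ I, a * x ∈ I) (hR : ∀ a : A, ∀ x ∈ I, x * a ∈ I)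
    (bai : ∃ (ι : Type) (p : Filter ι) (e : ι → ↥I), p.NeBot ∧
        (∃ C : ℝ, ∀ i, ‖e i‖ ≤ C) ∧
        (∀ x : ↥I, Tendsto (fun i => (e i : A) * (x : A)) p (𝓝 (x : A)) ∧
                   Tendsto (fun i => (x : A) * (e i : A)) p (𝓝 (x : A)))) :
    (∀ D : ↥I →L[ℂ] (↥I →L[ℂ] ℂ),
        (∀ x y : ↥I, D ⟨(x : A) * (y : A), hL x y y.2⟩ =
            (idealBimod I hL hR).dual.l (x : A) (D y) +
            (idealBimod I hL hR).dual.r (y : A) (D x)) →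
        ∃ f : ↥I →L[ℂ] ℂ, ∀ x : ↥I,
          D x = (idealBimod I hL hR).dual.l (x : A) f -
                (idealBimod I hL hR).dual.r (x : A) f) ↔
    (∀ D : A →L[ℂ] (↥I →L[ℂ] ℂ),
        IsDerivation (idealBimod I hL hR).dual D → IsInner (idealBimod I hL hR).dual D) := by
  obtain ⟨ι, p, e, hp, ⟨C, hC⟩, hlim⟩ := bai
  have hliml : ∀ x : ↥I, Tendsto (fun i => (e i : A) * (x : A)) p (𝓝 (x : A)) :=
    fun x => (hlim x).1
  have hlimr : ∀ x : ↥I, Tendsto (fun i => (x : A) * (e i : A)) p (𝓝 (x : A)) :=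
    fun x => (hlim x).2
  constructor
  · -- I-weak amenability of I implies A is I-weakly amenable
    intro hI D hD
    obtain ⟨f, hf⟩ := hI (D.comp I.subtypeL) (fun x y => hD (x : A) (y : A))
    refine ⟨f, ?_⟩
    intro a
    -- the difference derivation vanishes on I, hence everywhere
    have hadder : ∀ a b : A,
        (idealBimod I hL hR).dual.l (a * b) f - (idealBimod I hL hR).dual.r (a * b) f =
        (idealBimod I hL hR).dual.l a ((idealBimod I hL hR).dual.l b f -
          (idealBimod I hL hR).dual.r b f) +
        (idealBimod I hL hR).dual.r b ((idealBimod I hL hR).dual.l a f -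
          (idealBimod I hL hR).dual.r a f) := by
      intro a b
      rw [(idealBimod I hL hR).dual.l_mul a b f, (idealBimod I hL hR).dual.r_mul a b f,
        map_sub, map_sub, (idealBimod I hL hR).dual.lr a b f]
      abel
    have hvan := vanish_aux I hL hR e hp hliml
      (fun a => D a - ((idealBimod I hL hR).dual.l a f - (idealBimod I hL hR).dual.r a f))
      (by
        intro a b
        beta_reduce
        rw [hD a b, hadder a b]
        simp only [map_sub]
        abel)
      (by
        intro x
        have := hf x
        simp only [ContinuousLinearMap.comp_apply] at this
        rw [sub_eq_zero]
        exact this) a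
    rw [sub_eq_zero] at hvan
    exact hvan
  · -- A is I-weakly amenable implies I is weakly amenable
    intro hA D hD
    obtain ⟨E, hagree, hEder⟩ := extend_aux I hL hR e hp hC hliml hlimr D hD
    obtain ⟨f, hf⟩ := hA E hEder
    refine ⟨f, fun x => ?_⟩
    rw [← hagree x]
    exact hf (x : A)

end Paper
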